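/- Entropy bound for random bit strings via expected length (eq. (44) of the paper): Let M be a random variable taking finitely many values in {0,1}*, each of length at least 1, and suppose E[len(M)] ≤ m for some real m ≥ 1. Then H(M) ≤ m·(log 2 + h(1/m)), where h(p) = −p·log p − (1−p)·log(1−p) is the binary entropy function. -/

import Mathlib

open MeasureTheory

private lemma gibbs_pt {p q : ℝ} (hp : 0 ≤ p) (hq : 0 < q) :
    p - q ≤ p * Real.log p - p * Real.log q := by
  rcases eq_or_lt_of_le hp with h | h
  · simp [← h]
    linarith
  · have h1 : Real.log (q / p) ≤ q / p - 1 := Real.log_le_sub_one_of_pos (by positivity)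
    have h2 : Real.log (q / p) = Real.log q - Real.log p := Real.log_div hq.ne' h.ne'
    have h3 : p * Real.log (q / p) ≤ p * (q / p - 1) := by
      exact mul_le_mul_of_nonneg_left h1 h.le
    have h4 : p * (q / p) = q := by field_simp
    rw [h2] at h3
    nlinarith
  
private lemma gibbs_sum {α : Type*} (F : Finset α) (p q : α → ℝ)
    (hp : ∀ s ∈ F, 0 ≤ p s) (hq : ∀ s ∈ F, 0 < q s)
    (hp1 : ∑ s ∈ F, p s = 1) (hq1 : ∑ s ∈ F, q s ≤ 1) :
    -∑ s ∈ F, p s * Real.log (p s) ≤ -∑ s ∈ F, p s * Real.log (q s) := by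
  have h := Finset.sum_le_sum (fun s hs => gibbs_pt (hp s hs) (hq s hs))
  rw [Finset.sum_sub_distrib, Finset.sum_sub_distrib, hp1] at h
  linarith

/-- Kraft-type counting bound: grouping a sum over a finite set of bit strings by length. -/
private lemma kraft_aux {g : ℕ → ℝ} (hg : ∀ n, 0 ≤ g n) (F : Finset (List Bool)) :
    ∑ s ∈ F, g s.length ≤ ∑ n ∈ F.image List.length, (2 : ℝ) ^ n * g n := by
  rw [← Finset.sum_fiberwise_of_maps_to (fun s hs => Finset.mem_image_of_mem List.length hs)
      (fun s => g s.length)]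
  apply Finset.sum_le_sum
  intro n _
  have hcard : (F.filter (fun s => s.length = n)).card ≤ 2 ^ n := by
    have hinj : Set.InjOn (fun (s : List Bool) (i : Fin n) => s.getD i false)
        ↑(F.filter (fun s => s.length = n)) := by
      intro s hs t ht hst
      simp only [Finset.coe_filter, Set.mem_setOf_eq] at hs ht
      obtain ⟨hsF, hsn⟩ := hs
      obtain ⟨htF, htn⟩ := ht
      apply List.ext_getElem (hsn.trans htn.symm)
      intro i h1 h2
      have hi : i < n := hsn ▸ h1
      have h := congrFun hst ⟨i, hi⟩
      simp only at h
      rwa [List.getD_eq_getElem s false h1, List.getD_eq_getElem t false h2] at h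
    have := Finset.card_le_card_of_injOn (s := F.filter (fun s => s.length = n))
      (t := (Finset.univ : Finset (Fin n → Bool)))
      (fun (s : List Bool) (i : Fin n) => s.getD i false)
      (fun s _ => Finset.mem_univ _) hinj
    simpa using this
  calc ∑ s ∈ F.filter (fun s => s.length = n), g s.length
      = ∑ s ∈ F.filter (fun s => s.length = n), g n := by
        apply Finset.sum_congr rfl
        intro s hs
        rw [(Finset.mem_filter.mp hs).2]
    _ = (F.filter (fun s => s.length = n)).card * g n := by
        rw [Finset.sum_const, nsmul_eq_mul]
    _ ≤ (2 : ℝ) ^ n * g n := by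
        apply mul_le_mul_of_nonneg_right _ (hg n)
        calc ((F.filter (fun s => s.length = n)).card : ℝ) ≤ ((2 ^ n : ℕ) : ℝ) := by
              exact_mod_cast hcard
          _ = (2 : ℝ) ^ n := by push_cast; ring

/-- Partial geometric sums with ratio `x ∈ [0,1)` and weight `1 - x`, over distinct
exponents `≥ 1`, are at most `1`. -/
private lemma geom_bound {x : ℝ} (hx0 : 0 ≤ x) (hx1 : x < 1) (T : Finset ℕ)
    (hT : ∀ n ∈ T, 1 ≤ n) :
    ∑ n ∈ T, (1 - x) * x ^ (n - 1) ≤ 1 := by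
  set N := T.sup id + 1 with hN
  have hsub : T.image (fun n => n - 1) ⊆ Finset.range N := by
    intro j hj
    obtain ⟨n, hn, rfl⟩ := Finset.mem_image.mp hj
    have : n ≤ T.sup id := Finset.le_sup (f := id) hn
    exact Finset.mem_range.mpr (by omega)
  have h1 : ∑ n ∈ T, (1 - x) * x ^ (n - 1)
      = ∑ j ∈ T.image (fun n => n - 1), (1 - x) * x ^ j := by
    rw [Finset.sum_image]
    intro a ha b hb hab
    have ha1 := hT a ha
    have hb1 := hT b hb
    simp only at hab
    omega
  rw [h1]
  have h2 : ∑ j ∈ T.image (fun n => n - 1), (1 - x) * x ^ j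
      ≤ ∑ j ∈ Finset.range N, (1 - x) * x ^ j := by
    apply Finset.sum_le_sum_of_subset_of_nonneg hsub
    intro j _ _
    have : (0:ℝ) ≤ x ^ j := pow_nonneg hx0 j
    nlinarith
  have h3 : (∑ j ∈ Finset.range N, x ^ j) * (x - 1) = x ^ N - 1 := geom_sum_mul x N
  have h4 : (0:ℝ) ≤ x ^ N := pow_nonneg hx0 N
  have h5 : ∑ j ∈ Finset.range N, (1 - x) * x ^ j
      = (1 - x) * ∑ j ∈ Finset.range N, x ^ j := by rw [Finset.mul_sum]
  nlinarith [h2, h3, h4, h5]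

theorem entropy_of_bitstring_via_expected_length
    {Ω : Type*} [MeasurableSpace Ω] (P : Measure Ω) [IsProbabilityMeasure P]
    (M : Ω → List Bool)
    (hM : ∀ s : List Bool, MeasurableSet {ω | M ω = s})
    (F : Finset (List Bool)) (hrange : ∀ ω, M ω ∈ F)
    (hlen : ∀ s ∈ F, 1 ≤ s.length)
    (m : ℝ) (hm : 1 ≤ m)
    (hE : ∑ s ∈ F, (P {ω | M ω = s}).toReal * (s.length : ℝ) ≤ m) :
    -- H(M) ≤ m · (log 2 + h(1/m))
    (-∑ s ∈ F, (P {ω | M ω = s}).toReal * Real.log (P {ω | M ω = s}).toReal)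
      ≤ m * (Real.log 2 +
          (-(1 / m) * Real.log (1 / m) - (1 - 1 / m) * Real.log (1 - 1 / m))) := by
  set p : List Bool → ℝ := fun s => (P {ω | M ω = s}).toReal with hpdef
  have hp0 : ∀ s, 0 ≤ p s := fun s => ENNReal.toReal_nonneg
  have hm0 : (0:ℝ) < m := by linarith
  -- the probabilities sum to one
  have hp1 : ∑ s ∈ F, p s = 1 := by
    have hdisj : (↑F : Set (List Bool)).PairwiseDisjoint (fun s => {ω | M ω = s}) := by
      intro s _ t _ hst
      rw [Function.onFun, Set.disjoint_left]
      intro ω h1 h2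
      simp only [Set.mem_setOf_eq] at h1 h2
      exact hst (h1.symm.trans h2)
    have hun : (⋃ s ∈ F, {ω | M ω = s}) = Set.univ := by
      ext ω
      simp only [Set.mem_iUnion, Set.mem_setOf_eq, Set.mem_univ, iff_true]
      exact ⟨M ω, hrange ω, rfl⟩
    have := measure_biUnion_finset (μ := P) hdisj (fun s _ => hM s)
    rw [hun, measure_univ] at this
    have := congrArg ENNReal.toReal this
    rw [ENNReal.toReal_sum (fun s _ => measure_ne_top P _)] at this
    simpa using this.symm
  rcases eq_or_lt_of_le hm with h1 | h1
  · -- case m = 1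
    subst h1
    have hRHS : (1:ℝ) * (Real.log 2 +
        (-(1 / 1) * Real.log (1 / 1) - (1 - 1 / 1) * Real.log (1 - 1 / 1))) = Real.log 2 := by
      norm_num
    rw [hRHS]
    -- all mass is on length-1 strings
    have hzsum : ∑ s ∈ F, p s * ((s.length : ℝ) - 1) = 0 := by
      have hle : ∑ s ∈ F, p s * ((s.length : ℝ) - 1) ≤ 0 := by
        have : ∑ s ∈ F, p s * ((s.length : ℝ) - 1)
            = ∑ s ∈ F, p s * (s.length : ℝ) - ∑ s ∈ F, p s := by
          rw [← Finset.sum_sub_distrib]; apply Finset.sum_congr rfl; intro s _; ring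
        rw [this, hp1]; linarith
      have hge : 0 ≤ ∑ s ∈ F, p s * ((s.length : ℝ) - 1) := by
        apply Finset.sum_nonneg
        intro s hs
        have := hlen s hs
        have : (1:ℝ) ≤ (s.length : ℝ) := by exact_mod_cast this
        have := hp0 s
        nlinarith
      linarith
    have hzero : ∀ s ∈ F, s.length ≠ 1 → p s = 0 := by
      intro s hs hne
      have hterm : ∀ t ∈ F, 0 ≤ p t * ((t.length : ℝ) - 1) := by
        intro t ht
        have h1 := hlen t ht
        have h1' : (1:ℝ) ≤ (t.length : ℝ) := by exact_mod_cast h1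
        have := hp0 t
        nlinarith
      have := (Finset.sum_eq_zero_iff_of_nonneg hterm).mp hzsum s hs
      have hl2 : 2 ≤ s.length := by
        have := hlen s hs; omega
      have hl2' : (2:ℝ) ≤ (s.length : ℝ) := by exact_mod_cast hl2
      nlinarith [hp0 s]
    set G := F.filter (fun s => s.length = 1) with hG
    have hsum_eq : ∀ f : List Bool → ℝ, (∀ s ∈ F, p s = 0 → f s = 0) →
        ∑ s ∈ G, f s = ∑ s ∈ F, f s := by
      intro f hf
      apply Finset.sum_subset (Finset.filter_subset _ _)
      intro s hs hns
      apply hf s hs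
      apply hzero s hs
      intro hc
      exact hns (Finset.mem_filter.mpr ⟨hs, hc⟩)
    have hpG : ∑ s ∈ G, p s = 1 := by
      rw [hsum_eq p (fun s _ h => h)]; exact hp1
    have hplogG : ∑ s ∈ G, p s * Real.log (p s) = ∑ s ∈ F, p s * Real.log (p s) := by
      apply hsum_eq
      intro s _ h
      rw [h]; ring
    have hcardG : G.card ≤ 2 := by
      have hinj : Set.InjOn (fun (s : List Bool) => s.headI) ↑G := by
        intro s hs t ht hst
        simp only [hG, Finset.coe_filter, Set.mem_setOf_eq] at hs ht
        obtain ⟨a, rfl⟩ := List.length_eq_one_iff.mp hs.2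
        obtain ⟨b, rfl⟩ := List.length_eq_one_iff.mp ht.2
        simpa using hst
      have := Finset.card_le_card_of_injOn (s := G) (t := (Finset.univ : Finset Bool))
        (fun (s : List Bool) => s.headI) (fun s _ => Finset.mem_univ _) hinj
      simpa using this
    have hgibbs := gibbs_sum G p (fun _ => (1/2 : ℝ)) (fun s _ => hp0 s)
      (fun s _ => by norm_num) hpG ?_
    · rw [hplogG] at hgibbs
      calc -∑ s ∈ F, p s * Real.log (p s) ≤ -∑ s ∈ G, p s * Real.log (1/2 : ℝ) := hgibbs
        _ = Real.log 2 * ∑ s ∈ G, p s := by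
            rw [Finset.mul_sum, ← Finset.sum_neg_distrib]
            apply Finset.sum_congr rfl
            intro s _
            rw [Real.log_div one_ne_zero two_ne_zero, Real.log_one]
            ring
        _ = Real.log 2 := by rw [hpG, mul_one]
    · calc ∑ _s ∈ G, (1/2 : ℝ) = G.card * (1/2 : ℝ) := by
            rw [Finset.sum_const, nsmul_eq_mul]
        _ ≤ 2 * (1/2 : ℝ) := by
            apply mul_le_mul_of_nonneg_right _ (by norm_num)
            exact_mod_cast hcardG
        _ = 1 := by norm_num
  · -- case m > 1
    set θ : ℝ := 1 / m with hθdef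
    have hθ0 : 0 < θ := by positivity
    have hθ1 : θ < 1 := by rw [hθdef]; rw [div_lt_one hm0]; linarith
    set x : ℝ := 1 - θ with hxdef
    have hx0 : 0 < x := by simp [hxdef]; linarith
    have hx1 : x < 1 := by simp [hxdef]; linarith
    set q : List Bool → ℝ := fun s => (1/2 : ℝ) ^ s.length * (θ * x ^ (s.length - 1)) with hqdef
    have hq0 : ∀ s, 0 < q s := by
      intro s
      apply mul_pos (pow_pos (by norm_num) _) (mul_pos hθ0 (pow_pos hx0 _))
    -- Kraft: ∑ q ≤ 1
    have hq1 : ∑ s ∈ F, q s ≤ 1 := by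
      have hg : ∀ n : ℕ, 0 ≤ (1/2 : ℝ) ^ n * (θ * x ^ (n - 1)) := by
        intro n; positivity
      calc ∑ s ∈ F, q s ≤ ∑ n ∈ F.image List.length, (2:ℝ) ^ n * ((1/2:ℝ) ^ n * (θ * x ^ (n-1))) :=
            kraft_aux hg F
        _ = ∑ n ∈ F.image List.length, θ * x ^ (n - 1) := by
            apply Finset.sum_congr rfl
            intro n _
            have h2 : (2:ℝ) ^ n * (1/2:ℝ) ^ n = 1 := by
              rw [← mul_pow]; norm_num
            calc (2:ℝ) ^ n * ((1/2:ℝ) ^ n * (θ * x ^ (n-1)))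
                = ((2:ℝ) ^ n * (1/2:ℝ) ^ n) * (θ * x ^ (n-1)) := by ring
              _ = θ * x ^ (n-1) := by rw [h2, one_mul]
        _ = ∑ n ∈ F.image List.length, (1 - x) * x ^ (n - 1) := by
            apply Finset.sum_congr rfl; intro n _; rw [hxdef]; ring
        _ ≤ 1 := by
            apply geom_bound hx0.le hx1
            intro n hn
            obtain ⟨s, hs, rfl⟩ := Finset.mem_image.mp hn
            exact hlen s hs
    -- Gibbs inequality
    have hgibbs := gibbs_sum F p q (fun s _ => hp0 s) (fun s _ => hq0 s) hp1 hq1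
    -- compute -∑ p log q
    have hlogq : ∀ s ∈ F, Real.log (q s)
        = -(s.length : ℝ) * Real.log 2 + Real.log θ + ((s.length : ℝ) - 1) * Real.log x := by
      intro s hs
      rw [hqdef]
      have hs1 : ((1/2:ℝ) ^ s.length) ≠ 0 := by positivity
      have hs2 : (θ * x ^ (s.length - 1)) ≠ 0 := by positivity
      rw [Real.log_mul hs1 hs2, Real.log_mul (ne_of_gt hθ0) (by positivity),
        Real.log_pow, Real.log_pow, Real.log_div one_ne_zero two_ne_zero, Real.log_one]
      have hcast : ((s.length - 1 : ℕ) : ℝ) = (s.length : ℝ) - 1 := by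
        have := hlen s hs
        push_cast [this]
        ring
      rw [hcast]
      ring
    set E : ℝ := ∑ s ∈ F, p s * (s.length : ℝ) with hEdef
    have hsumlogq : ∑ s ∈ F, p s * Real.log (q s)
        = E * (Real.log x - Real.log 2) + (Real.log θ - Real.log x) := by
      have step : ∑ s ∈ F, p s * Real.log (q s)
          = ∑ s ∈ F, (p s * (s.length : ℝ) * (Real.log x - Real.log 2)
              + p s * (Real.log θ - Real.log x)) := by
        apply Finset.sum_congr rfl
        intro s hs
        rw [hlogq s hs]
        ring
      rw [step, Finset.sum_add_distrib, ← Finset.sum_mul, ← Finset.sum_mul, hp1, one_mul,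
        ← hEdef]
    have hlogx : Real.log x ≤ 0 := Real.log_nonpos hx0.le hx1.le
    have hlog2 : 0 ≤ Real.log 2 := Real.log_nonneg (by norm_num)
    have hmθ : m * θ = 1 := by rw [hθdef]; field_simp
    have hmx : m * x = m - 1 := by rw [hxdef, hθdef]; field_simp
    calc -∑ s ∈ F, p s * Real.log (p s) ≤ -∑ s ∈ F, p s * Real.log (q s) := hgibbs
      _ = E * (Real.log 2 - Real.log x) + (Real.log x - Real.log θ) := by
          rw [hsumlogq]; ring
      _ ≤ m * (Real.log 2 - Real.log x) + (Real.log x - Real.log θ) := by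
          have hEm : E ≤ m := hE
          nlinarith [hEm, hlogx, hlog2]
      _ = m * (Real.log 2 + (-θ * Real.log θ - x * Real.log x)) := by
          linear_combination (Real.log θ) * hmθ + (Real.log x) * hmx
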